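/- Let p, q be integers with 0 < q < p and gcd(p,q) = 1, let p/q = [a₁, …, a_m] be the continued fraction expansion produced by the Euclidean algorithm, and let ψ_{p,q} ∈ G be a^{a₁}·b^{-a₂}·a^{a₃}·⋯·a^{a_m} if m is odd and a^{a₁}·b^{-a₂}·⋯·b^{-a_m}·b·a·b if m is even. Then for every ψ ∈ G such that the matrix Ω(ψ) has top-left entry q and bottom-left entry p, there exist an integer cₒ and elements ψ', ψ'' in the kernel of Ω such that ψ·b^{-cₒ} = ψ'·ψ_{p,q} and ψ·b^{-cₒ} = ψ_{p,q}·ψ''. -/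

import Mathlib

/-- `SL2Z` is the group of 2×2 integer matrices of determinant 1. -/
abbrev SL2Z := Matrix.SpecialLinearGroup (Fin 2) ℤ

/-- The matrix A = [[1,0],[1,1]]. -/
def matA : SL2Z := ⟨!![1, 0; 1, 1], by norm_num [Matrix.det_fin_two_of]⟩

/-- The matrix B = [[1,-1],[0,1]]. -/
def matB : SL2Z := ⟨!![1, -1; 0, 1], by norm_num [Matrix.det_fin_two_of]⟩

/-- The four relators of the presentation of `PMCG₂(T)`:
`a·b·a·b⁻¹·a⁻¹·b⁻¹`, `a·c·a·c⁻¹·a⁻¹·c⁻¹`, `b·c·b⁻¹·c⁻¹`, `(a·b·c)⁴`,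
where `a, b, c` are the generators `0, 1, 2`. -/
def pmcgRels : Set (FreeGroup (Fin 3)) :=
  { FreeGroup.of 0 * FreeGroup.of 1 * FreeGroup.of 0 *
      (FreeGroup.of 1)⁻¹ * (FreeGroup.of 0)⁻¹ * (FreeGroup.of 1)⁻¹,
    FreeGroup.of 0 * FreeGroup.of 2 * FreeGroup.of 0 *
      (FreeGroup.of 2)⁻¹ * (FreeGroup.of 0)⁻¹ * (FreeGroup.of 2)⁻¹,
    FreeGroup.of 1 * FreeGroup.of 2 * (FreeGroup.of 1)⁻¹ * (FreeGroup.of 2)⁻¹,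
    (FreeGroup.of 0 * FreeGroup.of 1 * FreeGroup.of 2) ^ 4 }

/-- `G = ⟨a, b, c | a·b·a = b·a·b, a·c·a = c·a·c, b·c = c·b, (a·b·c)⁴ = 1⟩`,
a presentation of `PMCG₂(T)`. -/
abbrev G := PresentedGroup pmcgRels

/-- The generator `a` (the Dehn twist `t_α`). -/
def ga : G := PresentedGroup.of 0
/-- The generator `b` (the Dehn twist `t_β`). -/
def gb : G := PresentedGroup.of 1
/-- The generator `c` (the Dehn twist `t_γ`). -/
def gc : G := PresentedGroup.of 2

/-- The continued fraction `[a₁, …, a_m] = a₁ + 1/(a₂ + 1/(⋯ + 1/a_m))` of a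
list of (positive) integers, as a rational number. -/
def cf : List ℤ → ℚ
  | [] => 0
  | x :: l => x + (cf l)⁻¹

/-- The alternating product `a^{a₁}·b^{-a₂}·a^{a₃}·⋯` in `G` (factor `a^{aᵢ}`
for odd `i`, factor `b^{-aᵢ}` for even `i`, starting with `a` when the flag
is `false`). -/
def altG : Bool → List ℤ → G
  | _, [] => 1
  | false, x :: l => ga ^ x * altG true l
  | true, x :: l => gb ^ (-x) * altG false l

/-- The element `ψ_{p,q} ∈ G` associated with the continued fraction
expansion `p/q = [a₁, …, a_m]`: it equals `a^{a₁}·b^{-a₂}·⋯·a^{a_m}` if `m`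
is odd, and `a^{a₁}·b^{-a₂}·⋯·b^{-a_m}·b·a·b` if `m` is even. -/
def ψpq (L : List ℤ) : G :=
  if Odd L.length then altG false L else altG false L * (gb * ga * gb)

set_option linter.unnecessarySeqFocus false

lemma matA_zpow (n : ℤ) : ((matA ^ n : SL2Z) : Matrix (Fin 2) (Fin 2) ℤ) = !![1, 0; n, 1] := by
  induction n using Int.induction_on with
  | zero =>
    rw [zpow_zero, Matrix.SpecialLinearGroup.coe_one]
    ext i j; fin_cases i <;> fin_cases j <;> simp [Matrix.one_apply]
  | succ k ih =>
    rw [zpow_add_one, Matrix.SpecialLinearGroup.coe_mul, ih]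
    rw [show ((matA : SL2Z) : Matrix (Fin 2) (Fin 2) ℤ) = !![1,0;1,1] from rfl]
    ext i j; fin_cases i <;> fin_cases j <;>
      simp [Matrix.mul_apply, Fin.sum_univ_two]
  | pred k ih =>
    rw [zpow_sub_one, Matrix.SpecialLinearGroup.coe_mul, ih]
    have h : ((matA⁻¹ : SL2Z) : Matrix (Fin 2) (Fin 2) ℤ) = !![1,0;-1,1] := by
      rw [Matrix.SpecialLinearGroup.SL2_inv_expl]; rfl
    rw [h]
    ext i j; fin_cases i <;> fin_cases j <;>
      simp [Matrix.mul_apply, Fin.sum_univ_two] <;> ring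

lemma matB_zpow (n : ℤ) : ((matB ^ n : SL2Z) : Matrix (Fin 2) (Fin 2) ℤ) = !![1, -n; 0, 1] := by
  induction n using Int.induction_on with
  | zero =>
    rw [zpow_zero, Matrix.SpecialLinearGroup.coe_one]
    ext i j; fin_cases i <;> fin_cases j <;> simp [Matrix.one_apply]
  | succ k ih =>
    rw [zpow_add_one, Matrix.SpecialLinearGroup.coe_mul, ih]
    rw [show ((matB : SL2Z) : Matrix (Fin 2) (Fin 2) ℤ) = !![1,-1;0,1] from rfl]
    ext i j; fin_cases i <;> fin_cases j <;>
      simp [Matrix.mul_apply, Fin.sum_univ_two] <;> ring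
  | pred k ih =>
    rw [zpow_sub_one, Matrix.SpecialLinearGroup.coe_mul, ih]
    have h : ((matB⁻¹ : SL2Z) : Matrix (Fin 2) (Fin 2) ℤ) = !![1,1;0,1] := by
      rw [Matrix.SpecialLinearGroup.SL2_inv_expl]; rfl
    rw [h]
    ext i j; fin_cases i <;> fin_cases j <;>
      simp [Matrix.mul_apply, Fin.sum_univ_two] <;> ring

lemma cf_pos : ∀ (L : List ℤ), (∀ x ∈ L, 0 < x) → L ≠ [] → 0 < cf L := by
  intro L
  induction L with
  | nil => intro _ h; exact absurd rfl h
  | cons x l ih =>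
    intro hpos _
    have hx : (0:ℚ) < x := by exact_mod_cast hpos x List.mem_cons_self
    cases l with
    | nil => simpa [cf] using hx
    | cons y m =>
      have h := ih (fun z hz => hpos z (List.mem_cons_of_mem x hz)) (by simp)
      have : 0 < (cf (y :: m))⁻¹ := inv_pos.mpr h
      show 0 < (x:ℚ) + (cf (y :: m))⁻¹
      linarith

lemma cf_num_den (x : ℤ) (l : List ℤ) (hl : 0 < cf l) :
    (cf (x :: l)).num = x * (cf l).num + (cf l).den ∧
      ((cf (x :: l)).den : ℤ) = (cf l).num := by
  set r := cf l with hr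
  have hn : 0 < r.num := Rat.num_pos.mpr hl
  have h0 : IsCoprime ((r.den : ℤ)) r.num := by
    rw [Int.isCoprime_iff_gcd_eq_one]
    simpa [Int.gcd] using r.reduced.symm
  have h2 : IsCoprime (x * r.num + (r.den : ℤ)) r.num := by
    have := h0.add_mul_left_left x
    rwa [add_comm, mul_comm] at this
  have hcop : Nat.Coprime (x * r.num + (r.den:ℤ)).natAbs r.num.natAbs :=
    Int.isCoprime_iff_gcd_eq_one.mp h2
  have hq : cf (x :: l) = ((x * r.num + (r.den:ℤ) : ℤ) : ℚ) / (r.num : ℚ) := by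
    have hd : ((r.den : ℚ)) ≠ 0 := by exact_mod_cast r.den_ne_zero
    have hn' : ((r.num : ℚ)) ≠ 0 := by exact_mod_cast hn.ne'
    have hinv : r⁻¹ = (r.den : ℚ) / (r.num : ℚ) := by
      conv_lhs => rw [← Rat.num_div_den r]
      rw [inv_div]
    show (x : ℚ) + r⁻¹ = _
    rw [hinv]
    push_cast
    field_simp
    try ring
  constructor
  · rw [hq]; exact Rat.num_div_eq_of_coprime hn hcop
  · rw [hq]; exact Rat.den_div_eq_of_coprime hn hcop

lemma colKey (Ω : G →* SL2Z) (ha : Ω ga = matA) (hb : Ω gb = matB) :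
    ∀ (L : List ℤ), (∀ x ∈ L, 0 < x) → L ≠ [] →
      (((Ω (altG false L) : SL2Z) : Matrix (Fin 2) (Fin 2) ℤ) 0
          (if Odd L.length then 0 else 1) = ((cf L).den : ℤ) ∧
        ((Ω (altG false L) : SL2Z) : Matrix (Fin 2) (Fin 2) ℤ) 1
          (if Odd L.length then 0 else 1) = (cf L).num) ∧
      (((Ω (altG true L) : SL2Z) : Matrix (Fin 2) (Fin 2) ℤ) 0
          (if Odd L.length then 1 else 0) = (cf L).num ∧
        ((Ω (altG true L) : SL2Z) : Matrix (Fin 2) (Fin 2) ℤ) 1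
          (if Odd L.length then 1 else 0) = ((cf L).den : ℤ)) := by
  intro L
  induction L with
  | nil => intro _ h; exact absurd rfl h
  | cons x l ih =>
    intro hpos _
    have hΩf : Ω (altG false (x :: l)) = matA ^ x * Ω (altG true l) := by
      rw [show altG false (x :: l) = ga ^ x * altG true l from rfl, map_mul, map_zpow, ha]
    have hΩt : Ω (altG true (x :: l)) = matB ^ (-x) * Ω (altG false l) := by
      rw [show altG true (x :: l) = gb ^ (-x) * altG false l from rfl, map_mul, map_zpow, hb]
    cases l with
    | nil =>
      have hcf : cf [x] = (x : ℚ) := by simp [cf]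
      have hx : altG true ([] : List ℤ) = 1 := rfl
      have hx' : altG false ([] : List ℤ) = 1 := rfl
      rw [hx, map_one, mul_one] at hΩf
      rw [hx', map_one, mul_one] at hΩt
      simp only [List.length_singleton, hcf]
      norm_num [hΩf, hΩt, matA_zpow, matB_zpow]
    | cons y m =>
      have hposl : ∀ z ∈ y :: m, 0 < z := fun z hz => hpos z (List.mem_cons_of_mem x hz)
      obtain ⟨⟨F0, F1⟩, T0, T1⟩ := ih hposl (by simp)
      have hcfl := cf_pos (y :: m) hposl (by simp)
      obtain ⟨hnum, hden⟩ := cf_num_den x (y :: m) hcfl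
      have hpar : (x :: y :: m).length = (y :: m).length + 1 := rfl
      by_cases hodd : Odd (y :: m).length
      · simp only [if_pos hodd] at F0 F1 T0 T1
        have hodd' : ¬ Odd (x :: y :: m).length := by
          rw [hpar, Nat.odd_add_one]; simpa using hodd
        refine ⟨⟨?_, ?_⟩, ?_, ?_⟩ <;>
          simp only [if_neg hodd', hΩf, hΩt, Matrix.SpecialLinearGroup.coe_mul,
            matA_zpow, matB_zpow, Matrix.mul_apply, Fin.sum_univ_two, hnum, hden] <;>
          (try norm_num [F0, F1, T0, T1]) <;> (try ring)
      · simp only [if_neg hodd] at F0 F1 T0 T1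
        have hodd' : Odd (x :: y :: m).length := by
          rw [hpar, Nat.odd_add_one]; simpa using hodd
        refine ⟨⟨?_, ?_⟩, ?_, ?_⟩ <;>
          simp only [if_pos hodd', hΩf, hΩt, Matrix.SpecialLinearGroup.coe_mul,
            matA_zpow, matB_zpow, Matrix.mul_apply, Fin.sum_univ_two, hnum, hden] <;>
          (try norm_num [F0, F1, T0, T1]) <;> (try ring)

lemma psi_entries (Ω : G →* SL2Z) (ha : Ω ga = matA) (hb : Ω gb = matB)
    (L : List ℤ) (hpos : ∀ x ∈ L, 0 < x) (hne : L ≠ []) :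
    ((Ω (ψpq L) : SL2Z) : Matrix (Fin 2) (Fin 2) ℤ) 0 0 = ((cf L).den : ℤ) ∧
      ((Ω (ψpq L) : SL2Z) : Matrix (Fin 2) (Fin 2) ℤ) 1 0 = (cf L).num := by
  obtain ⟨⟨F0, F1⟩, -⟩ := colKey Ω ha hb L hpos hne
  by_cases hodd : Odd L.length
  · rw [ψpq, if_pos hodd]
    simp only [if_pos hodd] at F0 F1
    exact ⟨F0, F1⟩
  · rw [ψpq, if_neg hodd]
    simp only [if_neg hodd] at F0 F1
    have hS : Ω (gb * ga * gb) = ⟨!![0, -1; 1, 0], by norm_num [Matrix.det_fin_two_of]⟩ := by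
      rw [map_mul, map_mul, ha, hb]
      ext i j
      rw [Matrix.SpecialLinearGroup.coe_mul, Matrix.SpecialLinearGroup.coe_mul]
      fin_cases i <;> fin_cases j <;>
        simp [matA, matB, Matrix.SpecialLinearGroup.coe_mul, Matrix.mul_apply,
          Fin.sum_univ_two]
    rw [map_mul, hS]
    constructor <;>
      (erw [Matrix.SpecialLinearGroup.coe_mul]; simp [Matrix.SpecialLinearGroup.coe_mul, Matrix.mul_apply, Fin.sum_univ_two, F0, F1])

theorem stmt7 (p q : ℤ) (hq : 0 < q) (hqp : q < p) (hcop : Int.gcd p q = 1)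
    (L : List ℤ) (hne : L ≠ []) (hpos : ∀ x ∈ L, 0 < x)
    -- the continued fraction expansion produced by the Euclidean algorithm
    -- is precisely the one with positive coefficients whose last
    -- coefficient is at least 2:
    (hlast : 2 ≤ L.getLast hne)
    (hcf : (p : ℚ) / q = cf L)
    (Ω : G →* SL2Z) (ha : Ω ga = matA) (hb : Ω gb = matB) (hc : Ω gc = matB) :
    ∀ ψ : G, (Ω ψ : Matrix (Fin 2) (Fin 2) ℤ) 0 0 = q →
      (Ω ψ : Matrix (Fin 2) (Fin 2) ℤ) 1 0 = p →
      ∃ c₀ : ℤ, ∃ ψ' ∈ Ω.ker, ∃ ψ'' ∈ Ω.ker,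
        ψ * (gb ^ c₀)⁻¹ = ψ' * ψpq L ∧ ψ * (gb ^ c₀)⁻¹ = ψpq L * ψ'' := by
  intro ψ h00 h10
  -- numerator and denominator of cf L
  have hcopn : Nat.Coprime p.natAbs q.natAbs := hcop
  have hnum : (cf L).num = p := by
    rw [← hcf]; exact Rat.num_div_eq_of_coprime hq hcopn
  have hden : ((cf L).den : ℤ) = q := by
    rw [← hcf]; exact Rat.den_div_eq_of_coprime hq hcopn
  obtain ⟨M00, M10⟩ := psi_entries Ω ha hb L hpos hne
  rw [hden] at M00; rw [hnum] at M10
  -- the matrices of ψ and ψpq L share the first column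
  set P : SL2Z := Ω ψ with hP
  set M : SL2Z := Ω (ψpq L) with hM
  set N : SL2Z := P⁻¹ * M with hN
  have hPinv : ((P⁻¹ : SL2Z) : Matrix (Fin 2) (Fin 2) ℤ) =
      !![(P : Matrix (Fin 2) (Fin 2) ℤ) 1 1, -(P : Matrix (Fin 2) (Fin 2) ℤ) 0 1;
         -(P : Matrix (Fin 2) (Fin 2) ℤ) 1 0, (P : Matrix (Fin 2) (Fin 2) ℤ) 0 0] := by
    rw [Matrix.SpecialLinearGroup.SL2_inv_expl]
    ext i j; fin_cases i <;> fin_cases j <;> rfl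
  have hdetP : (P : Matrix (Fin 2) (Fin 2) ℤ) 0 0 * (P : Matrix (Fin 2) (Fin 2) ℤ) 1 1 -
      (P : Matrix (Fin 2) (Fin 2) ℤ) 0 1 * (P : Matrix (Fin 2) (Fin 2) ℤ) 1 0 = 1 := by
    rw [← Matrix.det_fin_two]; exact P.2
  have hN00 : ((N : SL2Z) : Matrix (Fin 2) (Fin 2) ℤ) 0 0 = 1 := by
    rw [hN, Matrix.SpecialLinearGroup.coe_mul, Matrix.mul_apply, Fin.sum_univ_two, hPinv,
      M00, M10]
    show (P : Matrix (Fin 2) (Fin 2) ℤ) 1 1 * q + -(P : Matrix (Fin 2) (Fin 2) ℤ) 0 1 * p = 1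
    rw [h00, h10] at hdetP
    linarith
  have hN10 : ((N : SL2Z) : Matrix (Fin 2) (Fin 2) ℤ) 1 0 = 0 := by
    rw [hN, Matrix.SpecialLinearGroup.coe_mul, Matrix.mul_apply, Fin.sum_univ_two, hPinv,
      M00, M10]
    show -(P : Matrix (Fin 2) (Fin 2) ℤ) 1 0 * q + (P : Matrix (Fin 2) (Fin 2) ℤ) 0 0 * p = 0
    rw [h00, h10]
    ring
  set c₀ : ℤ := ((N : SL2Z) : Matrix (Fin 2) (Fin 2) ℤ) 0 1 with hc₀
  have hdetN : (N : Matrix (Fin 2) (Fin 2) ℤ) 0 0 * (N : Matrix (Fin 2) (Fin 2) ℤ) 1 1 -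
      (N : Matrix (Fin 2) (Fin 2) ℤ) 0 1 * (N : Matrix (Fin 2) (Fin 2) ℤ) 1 0 = 1 := by
    rw [← Matrix.det_fin_two]; exact N.2
  have hN11 : ((N : SL2Z) : Matrix (Fin 2) (Fin 2) ℤ) 1 1 = 1 := by
    rw [hN00, hN10] at hdetN; linarith
  have hNB : N = matB ^ (-c₀) := by
    ext i j
    rw [matB_zpow]
    fin_cases i <;> fin_cases j <;>
      simp [hN00, hN10, hN11, hc₀]
  -- hence Ω (ψ * (gb ^ c₀)⁻¹) = M
  have hkey : Ω (ψ * (gb ^ c₀)⁻¹) = M := by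
    rw [map_mul, map_inv, map_zpow, hb, ← hP, ← zpow_neg, ← hNB, hN]
    group
  refine ⟨c₀, ψ * (gb ^ c₀)⁻¹ * (ψpq L)⁻¹, ?_, (ψpq L)⁻¹ * (ψ * (gb ^ c₀)⁻¹), ?_, ?_, ?_⟩
  · rw [MonoidHom.mem_ker, map_mul, map_inv, hkey, ← hM, mul_inv_cancel]
  · rw [MonoidHom.mem_ker, map_mul, map_inv, hkey, ← hM, inv_mul_cancel]
  · rw [mul_assoc, inv_mul_cancel, mul_one]
  · rw [← mul_assoc, mul_inv_cancel, one_mul]
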